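/- Let p be an odd prime, 0 ≤ u < v. Let I(u,v) be the set of nonnegative integers a whose base-p digits α_i(a) satisfy α_i(a) + α_{i+1}(a) ≤ 1 for all i, and α_i(a) = 0 for i < u or i ≥ v−2. Then in F_p[y_1,y_2]: [u,v] = Σ_{a ∈ I(u,v)} (−1)^a L_2^{p^u + p(p−1)a} · Q_{2,1}^{(p^{v-1}−p^u)/(p−1) − (p+1)a}. -/

import Mathlib

open MvPolynomial Finset

/-- `br p e = det (y_i ^ (p ^ e_j))` in `F_p[y_1,…,y_n]`. -/
noncomputable def br (p : ℕ) {n : ℕ} (e : Fin n → ℕ) : MvPolynomial (Fin n) (ZMod p) :=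
  Matrix.det (Matrix.of fun i j : Fin n => (X i : MvPolynomial (Fin n) (ZMod p)) ^ p ^ e j)

/-- `L_n = [0,1,…,n-1]`. -/
noncomputable def Lpoly (p n : ℕ) : MvPolynomial (Fin n) (ZMod p) :=
  br p (fun j : Fin n => (j : ℕ))

/-- `L_{n,s} = [0,…,ŝ,…,n]`. -/
noncomputable def Ls (p n s : ℕ) : MvPolynomial (Fin n) (ZMod p) :=
  br p (fun j : Fin n => if (j : ℕ) < s then (j : ℕ) else (j : ℕ) + 1)

/-- `α_i(a)`: the `i`-th digit in the base-`p` expansion of `a`. -/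
def alphaDigit (p a i : ℕ) : ℕ := a / p ^ i % p

/-- `I(u,v)`: nonnegative integers `a` with `α_i(a)+α_{i+1}(a) ≤ 1` for all `i`, and
`α_i(a) = 0` for `i < u` or `i ≥ v-2`. -/
def Iset (p u v : ℕ) : Set ℕ :=
  {a | (∀ i, alphaDigit p a i + alphaDigit p a (i + 1) ≤ 1) ∧
    ∀ i, (i < u ∨ v - 2 ≤ i) → alphaDigit p a i = 0}

open Classical in
/-- `I(u,v)` as a finset (every element of `I(u,v)` is `< p^v`). -/
noncomputable def Ifin (p u v : ℕ) : Finset ℕ :=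
  (Finset.range (p ^ v)).filter (fun a => a ∈ Iset p u v)

set_option linter.unusedSectionVars false

section digits
variable {p : ℕ} (hp : 1 < p)

lemma alphaDigit_zero (i : ℕ) : alphaDigit p 0 i = 0 := by
  simp [alphaDigit]

include hp in
lemma digits_zero_of_lt {a k : ℕ} (h : a < p ^ k) {i : ℕ} (hi : k ≤ i) :
    alphaDigit p a i = 0 := by
  have : a < p ^ i := lt_of_lt_of_le h (Nat.pow_le_pow_right (by omega) hi)
  simp [alphaDigit, Nat.div_eq_of_lt this]

include hp in
lemma lt_pow_of_digits_zero {a k : ℕ} (h : ∀ i, k ≤ i → alphaDigit p a i = 0) :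
    a < p ^ k := by
  by_contra h'
  push_neg at h'
  have ha : a ≠ 0 := by
    intro h0; subst h0
    have : 0 < p ^ k := pow_pos (by omega) k
    omega
  have hk : k ≤ Nat.log p a := (Nat.le_log_iff_pow_le hp ha).mpr h'
  have h1 : p ^ Nat.log p a ≤ a := Nat.pow_log_le_self p ha
  have h2 : a < p ^ (Nat.log p a + 1) := Nat.lt_pow_succ_log_self hp a
  have hd := h _ hk
  unfold alphaDigit at hd
  rw [pow_succ] at h2
  have hq1 : 1 ≤ a / p ^ Nat.log p a := (Nat.le_div_iff_mul_le (by positivity)).mpr (by omega)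
  have hq2 : a / p ^ Nat.log p a < p := Nat.div_lt_of_lt_mul (by
    have := pow_pos (show 0 < p by omega) (Nat.log p a)
    nlinarith)
  rw [Nat.mod_eq_of_lt hq2] at hd
  omega

include hp in
lemma alphaDigit_pow_add {k c : ℕ} (hc : c < p ^ k) (i : ℕ) :
    alphaDigit p (p ^ k + c) i =
      if i < k then alphaDigit p c i else if i = k then 1 else 0 := by
  unfold alphaDigit
  rcases lt_trichotomy i k with hik | hik | hik
  · rw [if_pos hik]
    have h1 : p ^ k + c = c + p * p ^ (k - i - 1) * p ^ i := by
      rw [mul_assoc, ← pow_add, ← pow_succ']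
      rw [show k - i - 1 + i + 1 = k from by omega]
      omega
    rw [h1, Nat.add_mul_div_right _ _ (by positivity), Nat.add_mul_mod_self_left]
  · subst hik
    rw [if_neg (lt_irrefl i), if_pos rfl,
      show p ^ i + c = c + p ^ i from by omega,
      Nat.add_div_right _ (by positivity), Nat.div_eq_of_lt hc]
    exact Nat.mod_eq_of_lt (by omega)
  · have h2 : p ^ k + c < p ^ i := by
      calc p ^ k + c < p ^ k + p ^ k := by omega
        _ = 2 * p ^ k := by ring
        _ ≤ p * p ^ k := Nat.mul_le_mul_right _ hp
        _ = p ^ (k + 1) := (pow_succ' p k).symm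
        _ ≤ p ^ i := Nat.pow_le_pow_right (by omega) (by omega)
    rw [Nat.div_eq_of_lt h2, if_neg (by omega), if_neg (by omega), Nat.zero_mod]
end digits
section isets
variable {p : ℕ} (hp : 1 < p)

lemma zero_mem_Iset (u v : ℕ) : 0 ∈ Iset p u v := by
  constructor <;> intro i <;> simp [alphaDigit_zero]

include hp in
lemma Iset_lt {u v a : ℕ} (ha : a ∈ Iset p u v) : a < p ^ (v - 2) :=
  lt_pow_of_digits_zero hp (fun i hi => ha.2 i (Or.inr hi))

lemma Iset_digit_le_one {u v a : ℕ} (ha : a ∈ Iset p u v) (i : ℕ) :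
    alphaDigit p a i ≤ 1 := le_trans (Nat.le_add_right _ _) (ha.1 i)

include hp in
lemma Iset_eq_zero {u v a : ℕ} (hv : v ≤ u + 2) (ha : a ∈ Iset p u v) : a = 0 := by
  have : a < p ^ 0 := lt_pow_of_digits_zero hp (fun i _ => by
    rcases lt_or_ge i u with h | h
    · exact ha.2 i (Or.inl h)
    · exact ha.2 i (Or.inr (by omega)))
  simpa using this

lemma Iset_mono {u v v' a : ℕ} (hv : v ≤ v') (ha : a ∈ Iset p u v) : a ∈ Iset p u v' :=
  ⟨ha.1, fun i hi => ha.2 i (by omega)⟩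

include hp in
lemma Iset_insert {u w c : ℕ} (hw : u + 2 ≤ w) (hc : c ∈ Iset p u (w - 1)) :
    p ^ (w - 2) + c ∈ Iset p u (w + 1) := by
  have hclt : c < p ^ (w - 2) := by
    have := Iset_lt hp hc
    exact lt_of_lt_of_le this (Nat.pow_le_pow_right (by omega) (by omega))
  have hd := alphaDigit_pow_add hp hclt
  constructor
  · intro i
    rw [hd i, hd (i + 1)]
    rcases lt_trichotomy (i + 1) (w - 2) with h | h | h
    · rw [if_pos (by omega), if_pos h]; exact hc.1 i
    · rw [if_pos (by omega), if_neg (by omega), if_pos h]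
      have : alphaDigit p c i = 0 := hc.2 i (Or.inr (by omega))
      omega
    · rcases eq_or_lt_of_le (show w - 2 ≤ i from by omega) with h2 | h2
      · rw [if_neg (by omega), if_pos h2.symm, if_neg (by omega), if_neg (by omega)]
      · rw [if_neg (by omega), if_neg (by omega), if_neg (by omega), if_neg (by omega)]
        omega
  · intro i hi
    rw [hd i]
    rcases hi with hi | hi
    · rw [if_pos (by omega)]; exact hc.2 i (Or.inl hi)
    · rw [if_neg (by omega), if_neg (by omega)]

include hp in
lemma Iset_succ_iff {u w a : ℕ} (hw : u + 2 ≤ w) :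
    a ∈ Iset p u (w + 1) ↔
      a ∈ Iset p u w ∨ ∃ c ∈ Iset p u (w - 1), a = p ^ (w - 2) + c := by
  constructor
  · intro ha
    by_cases h0 : alphaDigit p a (w - 2) = 0
    · left
      refine ⟨ha.1, fun i hi => ?_⟩
      rcases hi with hi | hi
      · exact ha.2 i (Or.inl hi)
      · rcases eq_or_lt_of_le hi with h2 | h2
        · rw [← h2]; exact h0
        · exact ha.2 i (Or.inr (by omega))
    · right
      have h1 : alphaDigit p a (w - 2) = 1 := by
        have := Iset_digit_le_one ha (w - 2); omega
      have halt : a < p ^ (w - 1) :=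
        lt_pow_of_digits_zero hp (fun i hi => ha.2 i (Or.inr (by omega)))
      have hdiv : a / p ^ (w - 2) = 1 := by
        have h2 : a / p ^ (w - 2) < p := by
          apply Nat.div_lt_of_lt_mul
          calc a < p ^ (w - 1) := halt
            _ = p ^ (w - 2) * p := by rw [← pow_succ]; congr 1; omega
        unfold alphaDigit at h1
        rw [Nat.mod_eq_of_lt h2] at h1
        exact h1
      set c := a % p ^ (w - 2) with hcdef
      have hclt : c < p ^ (w - 2) := Nat.mod_lt _ (by positivity)
      have hae : a = p ^ (w - 2) + c := by
        have := Nat.div_add_mod a (p ^ (w - 2))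
        rw [hdiv] at this; omega
      have hd := alphaDigit_pow_add hp hclt
      rw [← hae] at hd
      refine ⟨c, ⟨?_, ?_⟩, hae⟩
      · intro i
        rcases lt_trichotomy (i + 1) (w - 2) with h | h | h
        · have e1 := hd i; rw [if_pos (by omega)] at e1
          have e2 := hd (i + 1); rw [if_pos h] at e2
          rw [← e1, ← e2]; exact ha.1 i
        · have e1 := hd i; rw [if_pos (by omega)] at e1
          have h3 : alphaDigit p c (i + 1) = 0 := digits_zero_of_lt hp hclt (by omega)
          have := Iset_digit_le_one ha i
          omega
        · have h3 : alphaDigit p c i = 0 := digits_zero_of_lt hp hclt (by omega)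
          have h4 : alphaDigit p c (i + 1) = 0 := digits_zero_of_lt hp hclt (by omega)
          omega
      · intro i hi
        rcases hi with hi | hi
        · have e1 := hd i; rw [if_pos (by omega)] at e1
          rw [← e1]; exact ha.2 i (Or.inl hi)
        · rcases lt_or_ge i (w - 2) with h2 | h2
          · have hi2 : i = w - 3 ∧ w - 3 + 1 = w - 2 := by omega
            have e1 := hd i; rw [if_pos h2] at e1
            have hadj := ha.1 i
            rw [show i + 1 = w - 2 from by omega] at hadj
            omega
          · exact digits_zero_of_lt hp hclt h2
  · rintro (ha | ⟨c, hc, rfl⟩)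
    · exact Iset_mono (by omega) ha
    · exact Iset_insert hp hw hc

include hp in
lemma Iset_bound {u : ℕ} : ∀ v, u < v → ∀ a ∈ Iset p u v, p ^ u + (p ^ 2 - 1) * a ≤ p ^ (v - 1) := by
  intro v
  induction v using Nat.strong_induction_on with
  | _ v ih =>
    intro huv a ha
    rcases le_or_gt v (u + 2) with hv | hv
    · rw [Iset_eq_zero hp hv ha]
      simpa using Nat.pow_le_pow_right (by omega) (by omega)
    · obtain ⟨w, rfl⟩ : ∃ w, v = w + 1 := ⟨v - 1, by omega⟩
      have hw : u + 2 ≤ w := by omega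
      rcases (Iset_succ_iff hp hw).mp ha with ha' | ⟨c, hc, rfl⟩
      · have := ih w (by omega) (by omega) a ha'
        calc p ^ u + (p ^ 2 - 1) * a ≤ p ^ (w - 1) := this
          _ ≤ p ^ (w + 1 - 1) := Nat.pow_le_pow_right (by omega) (by omega)
      · have hIH := ih (w - 1) (by omega) (by omega) c hc
        have hkey : p ^ 2 * p ^ (w - 2) = p ^ (w + 1 - 1) := by
          rw [← pow_add]; congr 1; omega
        have h2 : 1 ≤ p ^ 2 := Nat.one_le_pow _ _ (by omega)
        have h3 : (p ^ 2 - 1) * p ^ (w - 2) + p ^ (w - 2) = p ^ 2 * p ^ (w - 2) := by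
          cases' Nat.exists_eq_add_of_le h2 with t ht
          rw [ht, Nat.add_sub_cancel_left]; ring
        have h4 : w - 1 - 1 = w - 2 := by omega
        rw [h4] at hIH
        calc p ^ u + (p ^ 2 - 1) * (p ^ (w - 2) + c)
            = (p ^ 2 - 1) * p ^ (w - 2) + (p ^ u + (p ^ 2 - 1) * c) := by ring
          _ ≤ (p ^ 2 - 1) * p ^ (w - 2) + p ^ (w - 2) := by omega
          _ = p ^ (w + 1 - 1) := by rw [h3, hkey]

end isets

section arith
variable {p : ℕ} (hp : 2 ≤ p)

include hp in
lemma geom_div_mul {u k : ℕ} (h : u ≤ k) :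
    ((p ^ k - p ^ u) / (p - 1)) * (p - 1) = p ^ k - p ^ u := by
  apply Nat.div_mul_cancel
  have h1 : p ^ k - p ^ u = p ^ u * (p ^ (k - u) - 1) := by
    rw [Nat.mul_sub, mul_one, ← pow_add, show u + (k - u) = k from by omega]
  have hdvd : p - 1 ∣ p ^ (k - u) - 1 := by
    have := Nat.sub_dvd_pow_sub_pow p 1 (k - u)
    simpa using this
  rw [h1]
  exact hdvd.mul_left _

include hp in
lemma p_sq_sub_one : (p + 1) * (p - 1) = p ^ 2 - 1 := by
  obtain ⟨q, rfl⟩ := Nat.exists_eq_add_of_le hp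
  have e1 : (2 + q) ^ 2 = q * q + 4 * q + 4 := by ring
  have e2 : (2 + q + 1) * (2 + q - 1) = q * q + 4 * q + 3 := by
    rw [show 2 + q - 1 = q + 1 from by omega]; ring
  omega

include hp in
lemma expQ1 {u w a : ℕ} (h : u < w) (hb : p ^ u + (p ^ 2 - 1) * a ≤ p ^ (w - 1)) :
    (p ^ w - p ^ u) / (p - 1) - (p + 1) * a =
      p ^ (w - 1) + ((p ^ (w - 1) - p ^ u) / (p - 1) - (p + 1) * a) := by
  have hM : ((p ^ (w - 1) - p ^ u) / (p - 1)) * (p - 1) = p ^ (w - 1) - p ^ u :=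
    geom_div_mul hp (by omega)
  set M := (p ^ (w - 1) - p ^ u) / (p - 1) with hMdef
  have e2 : p ^ u ≤ p ^ (w - 1) := Nat.pow_le_pow_right (by omega) (by omega)
  have e3 : p ^ (w - 1) ≤ p ^ w := Nat.pow_le_pow_right (by omega) (by omega)
  have key : (p ^ w - p ^ u) / (p - 1) = p ^ (w - 1) + M := by
    apply Nat.div_eq_of_eq_mul_left (by omega)
    have e1 : p ^ (w - 1) * (p - 1) = p ^ w - p ^ (w - 1) := by
      rw [Nat.mul_sub, mul_one, ← pow_succ, show w - 1 + 1 = w from by omega]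
    rw [add_mul, e1, hM]
    omega
  have hble : (p + 1) * a ≤ M := by
    have h1 : (p + 1) * a * (p - 1) = (p ^ 2 - 1) * a := by
      calc (p + 1) * a * (p - 1) = ((p + 1) * (p - 1)) * a := by ring
        _ = (p ^ 2 - 1) * a := by rw [p_sq_sub_one hp]
    have h2 : (p + 1) * a * (p - 1) ≤ M * (p - 1) := by omega
    exact Nat.le_of_mul_le_mul_right h2 (by omega)
  omega

include hp in
lemma expQ2 {u w c : ℕ} (h : u + 2 ≤ w) (hb : p ^ u + (p ^ 2 - 1) * c ≤ p ^ (w - 2)) :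
    (p ^ w - p ^ u) / (p - 1) - (p + 1) * (p ^ (w - 2) + c) =
      (p ^ (w - 2) - p ^ u) / (p - 1) - (p + 1) * c := by
  have hM : ((p ^ (w - 2) - p ^ u) / (p - 1)) * (p - 1) = p ^ (w - 2) - p ^ u :=
    geom_div_mul hp (by omega)
  set M := (p ^ (w - 2) - p ^ u) / (p - 1) with hMdef
  have e2 : p ^ u ≤ p ^ (w - 2) := Nat.pow_le_pow_right (by omega) (by omega)
  have e3 : p ^ (w - 2) ≤ p ^ w := Nat.pow_le_pow_right (by omega) (by omega)
  have key : (p ^ w - p ^ u) / (p - 1) = (p + 1) * p ^ (w - 2) + M := by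
    apply Nat.div_eq_of_eq_mul_left (by omega)
    have epow : p ^ 2 * p ^ (w - 2) = p ^ w := by
      rw [← pow_add, show 2 + (w - 2) = w from by omega]
    have e1 : (p + 1) * p ^ (w - 2) * (p - 1) = p ^ w - p ^ (w - 2) := by
      calc (p + 1) * p ^ (w - 2) * (p - 1) = ((p + 1) * (p - 1)) * p ^ (w - 2) := by ring
        _ = (p ^ 2 - 1) * p ^ (w - 2) := by rw [p_sq_sub_one hp]
        _ = p ^ 2 * p ^ (w - 2) - 1 * p ^ (w - 2) := Nat.sub_mul _ _ _
        _ = p ^ w - p ^ (w - 2) := by rw [one_mul, epow]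
    rw [add_mul, e1, hM]
    omega
  have hble : (p + 1) * c ≤ M := by
    have h1 : (p + 1) * c * (p - 1) = (p ^ 2 - 1) * c := by
      calc (p + 1) * c * (p - 1) = ((p + 1) * (p - 1)) * c := by ring
        _ = (p ^ 2 - 1) * c := by rw [p_sq_sub_one hp]
    have h2 : (p + 1) * c * (p - 1) ≤ M * (p - 1) := by omega
    exact Nat.le_of_mul_le_mul_right h2 (by omega)
  have hdist : (p + 1) * (p ^ (w - 2) + c) = (p + 1) * p ^ (w - 2) + (p + 1) * c := by ring
  omega

include hp in
lemma expQ_base : (p ^ (u + 1) - p ^ u) / (p - 1) = p ^ u := by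
  apply Nat.div_eq_of_eq_mul_left (by omega)
  rw [Nat.mul_sub, mul_one, ← pow_succ]

lemma expL {u c w : ℕ} (hw : 2 ≤ w) :
    p ^ u + p * (p - 1) * (p ^ (w - 2) + c) =
      (p ^ u + p * (p - 1) * c) + (p - 1) * p ^ (w - 1) := by
  rw [show w - 1 = w - 2 + 1 from by omega, pow_succ]
  ring

end arith

section poly
variable (p : ℕ) [Fact p.Prime]

lemma br_two (a b : ℕ) :
    br p ![a, b] = X 0 ^ p ^ a * X 1 ^ p ^ b - X 1 ^ p ^ a * X 0 ^ p ^ b := by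
  unfold br
  rw [Matrix.det_fin_two]
  simp only [Matrix.of_apply, Matrix.cons_val_zero, Matrix.cons_val_one, Matrix.head_cons]
  ring

lemma Lpoly_eq : Lpoly p 2 = br p ![0, 1] := by
  unfold Lpoly; congr 1; funext j; fin_cases j <;> rfl

lemma Ls_eq : Ls p 2 1 = br p ![0, 2] := by
  unfold Ls; congr 1; funext j; fin_cases j <;> rfl

lemma br_pow (a b k : ℕ) : br p ![a, b] ^ p ^ k = br p ![a + k, b + k] := by
  have hp := (Fact.out : p.Prime)
  rw [br_two, br_two, sub_pow_char_pow, mul_pow, mul_pow]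
  rw [← pow_mul, ← pow_mul, ← pow_mul, ← pow_mul, ← pow_add, ← pow_add]

lemma pluecker (a b c e : ℕ) :
    br p ![a, b] * br p ![c, e] - br p ![a, c] * br p ![b, e] +
      br p ![a, e] * br p ![b, c] = 0 := by
  simp only [br_two]; ring

lemma Lpoly_ne_zero : Lpoly p 2 ≠ 0 := by
  have hp := (Fact.out : p.Prime)
  intro h
  have e1 : (X 0 : MvPolynomial (Fin 2) (ZMod p)) ^ p ^ 0 * X 1 ^ p ^ 1 =
      monomial (Finsupp.single 0 1 + Finsupp.single 1 p) 1 := by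
    rw [X_pow_eq_monomial, X_pow_eq_monomial, monomial_mul, one_mul, pow_zero, pow_one]
  have e2 : (X 1 : MvPolynomial (Fin 2) (ZMod p)) ^ p ^ 0 * X 0 ^ p ^ 1 =
      monomial (Finsupp.single 1 1 + Finsupp.single 0 p) 1 := by
    rw [X_pow_eq_monomial, X_pow_eq_monomial, monomial_mul, one_mul, pow_zero, pow_one]
  have hne : (Finsupp.single (1 : Fin 2) 1 + Finsupp.single 0 p) ≠
      (Finsupp.single (0 : Fin 2) 1 + Finsupp.single 1 p) := by
    intro hc
    have h2 := hp.two_le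
    have := DFunLike.congr_fun hc (0 : Fin 2)
    simp [Finsupp.single_apply] at this
    omega
  have h2 : coeff (Finsupp.single 0 1 + Finsupp.single 1 p) (Lpoly p 2) = 1 := by
    rw [Lpoly_eq, br_two, e1, e2, coeff_sub, coeff_monomial, coeff_monomial,
      if_pos rfl, if_neg hne, sub_zero]
  rw [h] at h2
  simp at h2

lemma brL (k : ℕ) : Lpoly p 2 ^ p ^ k = br p ![k, k + 1] := by
  rw [Lpoly_eq, br_pow, zero_add, Nat.add_comm 1 k]

lemma brec (u t : ℕ) (Q : MvPolynomial (Fin 2) (ZMod p)) (hQ : Lpoly p 2 * Q = Ls p 2 1) :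
    br p ![u, t + 2] =
      Q ^ p ^ t * br p ![u, t + 1] -
        Lpoly p 2 ^ ((p - 1) * p ^ t) * br p ![u, t] := by
  have hp := (Fact.out : p.Prime)
  have h1 : br p ![t, t + 1] = Lpoly p 2 ^ p ^ t := (brL p t).symm
  have h2 : br p ![t, t + 2] = Lpoly p 2 ^ p ^ t * Q ^ p ^ t := by
    have := br_pow p 0 2 t
    rw [zero_add] at this
    rw [show (2 : ℕ) + t = t + 2 from by omega] at this
    rw [← this, ← Ls_eq, ← hQ, mul_pow]
  have h3 : br p ![t + 1, t + 2] = Lpoly p 2 ^ p ^ t * Lpoly p 2 ^ ((p - 1) * p ^ t) := by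
    have : p ^ t + (p - 1) * p ^ t = p ^ (t + 1) := by
      have h4 : p ^ (t + 1) = p * p ^ t := by rw [pow_succ']
      have h5 : 1 ≤ p := hp.one_le
      have h6 : (p - 1) * p ^ t = p * p ^ t - p ^ t := by
        rw [Nat.sub_mul, one_mul]
      have h7 : p ^ t ≤ p * p ^ t := Nat.le_mul_of_pos_left _ (by omega)
      omega
    rw [← pow_add, this, brL]
  have hP := pluecker p u t (t + 1) (t + 2)
  have hL : (Lpoly p 2 : MvPolynomial (Fin 2) (ZMod p)) ^ p ^ t ≠ 0 :=
    pow_ne_zero _ (Lpoly_ne_zero p)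
  apply mul_left_cancel₀ hL
  rw [h1] at hP
  rw [h2, h3] at hP
  linear_combination hP

end poly


section ifins
variable {p : ℕ} (hp : 1 < p)

include hp in
lemma mem_Ifin {u v a : ℕ} : a ∈ Ifin p u v ↔ a ∈ Iset p u v := by
  classical
  simp only [Ifin, Finset.mem_filter, Finset.mem_range]
  constructor
  · exact fun h => h.2
  · intro h
    exact ⟨lt_of_lt_of_le (Iset_lt hp h) (Nat.pow_le_pow_right (by omega) (by omega)), h⟩

include hp in
lemma Ifin_small {u v : ℕ} (hv : v ≤ u + 2) : Ifin p u v = {0} := by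
  ext a
  simp only [Finset.mem_singleton, mem_Ifin hp]
  constructor
  · exact Iset_eq_zero hp hv
  · rintro rfl; exact zero_mem_Iset u v

include hp in
lemma Ifin_succ {u w : ℕ} (hw : u + 2 ≤ w) :
    Ifin p u (w + 1) = Ifin p u w ∪ (Ifin p u (w - 1)).image (fun c => p ^ (w - 2) + c) := by
  ext a
  simp only [Finset.mem_union, Finset.mem_image, mem_Ifin hp, Iset_succ_iff hp hw]
  constructor
  · rintro (h | ⟨c, hc, rfl⟩)
    · exact Or.inl h
    · exact Or.inr ⟨c, hc, rfl⟩
  · rintro (h | ⟨c, hc, rfl⟩)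
    · exact Or.inl h
    · exact Or.inr ⟨c, hc, rfl⟩

include hp in
lemma Ifin_disjoint {u w : ℕ} (hw : u + 2 ≤ w) :
    Disjoint (Ifin p u w) ((Ifin p u (w - 1)).image (fun c => p ^ (w - 2) + c)) := by
  rw [Finset.disjoint_left]
  intro a ha hb
  rw [mem_Ifin hp] at ha
  simp only [Finset.mem_image, mem_Ifin hp] at hb
  obtain ⟨c, hc, rfl⟩ := hb
  have hclt : c < p ^ (w - 2) :=
    lt_of_lt_of_le (Iset_lt hp hc) (Nat.pow_le_pow_right (by omega) (by omega))
  have h1 := alphaDigit_pow_add hp hclt (w - 2)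
  rw [if_neg (lt_irrefl _), if_pos rfl] at h1
  have h0 : alphaDigit p (p ^ (w - 2) + c) (w - 2) = 0 := ha.2 _ (Or.inr (by omega))
  omega

end ifins


/-- For `0 ≤ u < v`, in `F_p[y₁,y₂]`:
`[u,v] = Σ_{a ∈ I(u,v)} (−1)^a · L₂^{p^u + p(p−1)a} · Q_{2,1}^{(p^{v-1}−p^u)/(p−1) − (p+1)a}`. -/
theorem stmt15 (p u v : ℕ) (hp : p.Prime) (hodd : Odd p) (huv : u < v)
    (Q21 : MvPolynomial (Fin 2) (ZMod p))
    (hQ21 : Lpoly p 2 * Q21 = Ls p 2 1) :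
    br p ![u, v] =
      ∑ a ∈ Ifin p u v,
        (-1 : MvPolynomial (Fin 2) (ZMod p)) ^ a *
          (Lpoly p 2) ^ (p ^ u + p * (p - 1) * a) *
          Q21 ^ ((p ^ (v - 1) - p ^ u) / (p - 1) - (p + 1) * a) := by
  haveI : Fact p.Prime := ⟨hp⟩
  have hp2 : 2 ≤ p := hp.two_le
  have hp1 : 1 < p := hp.one_lt
  revert huv
  induction v using Nat.strong_induction_on with
  | _ v ih =>
  intro huv
  rcases le_or_gt v (u + 2) with hv | hv
  · -- base cases
    rw [Ifin_small hp1 hv, Finset.sum_singleton]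
    simp only [pow_zero, one_mul, mul_zero, add_zero, Nat.sub_zero]
    rcases (by omega : v = u + 1 ∨ v = u + 2) with h | h
    · subst h
      rw [show u + 1 - 1 = u from by omega, Nat.sub_self, Nat.zero_div, pow_zero, mul_one]
      exact (brL p u).symm
    · subst h
      rw [show u + 2 - 1 = u + 1 from by omega, expQ_base hp2]
      have hb : br p ![u, u + 2] = (Ls p 2 1) ^ p ^ u := by
        rw [Ls_eq, br_pow, zero_add, show (2 : ℕ) + u = u + 2 from by omega]
      rw [hb, ← hQ21, mul_pow]
  · -- inductive step
    obtain ⟨w, rfl⟩ : ∃ w, v = w + 1 := ⟨v - 1, by omega⟩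
    have hw : u + 2 ≤ w := by omega
    have hrec : br p ![u, w + 1] =
        Q21 ^ p ^ (w - 1) * br p ![u, w] -
          Lpoly p 2 ^ ((p - 1) * p ^ (w - 1)) * br p ![u, w - 1] := by
      have h := brec p u (w - 1) Q21 hQ21
      rw [show w - 1 + 2 = w + 1 from by omega, show w - 1 + 1 = w from by omega] at h
      exact h
    rw [hrec, ih w (by omega) (by omega), ih (w - 1) (by omega) (by omega)]
    rw [Ifin_succ hp1 hw, Finset.sum_union (Ifin_disjoint hp1 hw),
      Finset.sum_image (fun x _ y _ h => by omega)]
    have h1 : Q21 ^ p ^ (w - 1) *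
        ∑ a ∈ Ifin p u w,
          (-1 : MvPolynomial (Fin 2) (ZMod p)) ^ a *
            (Lpoly p 2) ^ (p ^ u + p * (p - 1) * a) *
            Q21 ^ ((p ^ (w - 1) - p ^ u) / (p - 1) - (p + 1) * a) =
        ∑ a ∈ Ifin p u w,
          (-1 : MvPolynomial (Fin 2) (ZMod p)) ^ a *
            (Lpoly p 2) ^ (p ^ u + p * (p - 1) * a) *
            Q21 ^ ((p ^ (w + 1 - 1) - p ^ u) / (p - 1) - (p + 1) * a) := by
      rw [Finset.mul_sum]
      refine Finset.sum_congr rfl fun a ha => ?_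
      have haI := (mem_Ifin hp1).mp ha
      have hb := Iset_bound hp1 w (by omega) a haI
      rw [show w + 1 - 1 = w from by omega, expQ1 hp2 (by omega) hb, pow_add]
      ring
    have h2 : Lpoly p 2 ^ ((p - 1) * p ^ (w - 1)) *
        ∑ c ∈ Ifin p u (w - 1),
          (-1 : MvPolynomial (Fin 2) (ZMod p)) ^ c *
            (Lpoly p 2) ^ (p ^ u + p * (p - 1) * c) *
            Q21 ^ ((p ^ (w - 1 - 1) - p ^ u) / (p - 1) - (p + 1) * c) =
        -∑ c ∈ Ifin p u (w - 1),
          (-1 : MvPolynomial (Fin 2) (ZMod p)) ^ (p ^ (w - 2) + c) *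
            (Lpoly p 2) ^ (p ^ u + p * (p - 1) * (p ^ (w - 2) + c)) *
            Q21 ^ ((p ^ (w + 1 - 1) - p ^ u) / (p - 1) - (p + 1) * (p ^ (w - 2) + c)) := by
      rw [Finset.mul_sum, ← Finset.sum_neg_distrib]
      refine Finset.sum_congr rfl fun c hc => ?_
      have hcI := (mem_Ifin hp1).mp hc
      have hb := Iset_bound hp1 (w - 1) (by omega) c hcI
      rw [show w - 1 - 1 = w - 2 from by omega] at hb ⊢
      have hsign : (-1 : MvPolynomial (Fin 2) (ZMod p)) ^ (p ^ (w - 2) + c) =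
          -(-1 : MvPolynomial (Fin 2) (ZMod p)) ^ c := by
        rw [pow_add, (hodd.pow).neg_one_pow, neg_one_mul]
      rw [show w + 1 - 1 = w from by omega, expQ2 hp2 hw hb, hsign,
        expL (show 2 ≤ w from by omega), pow_add]
      ring
    rw [h1, h2, sub_neg_eq_add]
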